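/- Let α, β, γ ∈ ℂ satisfy 2 * |β|^2 = 1, |α|^2 = 1/2 and |γ|^2 = 1/4, and let φ ∈ ℝ. Define the 3×3 complex matrices A₁ = !![0, α, 0; β, γ, 0; 0, 0, -γ] and A₂ = !![0, 0, α; 0, 0, -γ; β * exp(-2*I*φ), -γ * exp(-2*I*φ), 0], and set A 0 = A₁, A 1 = A₂. Then the family (fun p : Fin 2 × Fin 2 => (A p.1)ᴴ * (A p.2)) of 3×3 complex matrices is NOT linearly independent over ℂ. -/

import Mathlib

open Matrix

theorem stmt9 (α β γ : ℂ) (φ : ℝ)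
    (hβ : 2 * ‖β‖ ^ 2 = 1)
    (hα : ‖α‖ ^ 2 = 1/2)
    (hγ : ‖γ‖ ^ 2 = 1/4)
    (A : Fin 2 → Matrix (Fin 3) (Fin 3) ℂ)
    (hA0 : A 0 = !![0, α, 0; β, γ, 0; 0, 0, -γ])
    (hA1 : A 1 = !![0, 0, α; 0, 0, -γ;
      β * Complex.exp (-2 * Complex.I * φ), -γ * Complex.exp (-2 * Complex.I * φ), 0]) :
    ¬ LinearIndependent ℂ (fun p : Fin 2 × Fin 2 => (A p.1)ᴴ * (A p.2)) := by
  set e : ℂ := Complex.exp (-2 * Complex.I * φ) with he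
  have hγc : (starRingEnd ℂ) γ * γ = 1/4 := by
    rw [mul_comm, Complex.mul_conj, ← Complex.sq_norm]
    rw [hγ]; norm_num
  have hαc : (starRingEnd ℂ) α * α = 1/2 := by
    rw [mul_comm, Complex.mul_conj, ← Complex.sq_norm]
    rw [hα]; norm_num
  have hee : e * (starRingEnd ℂ) e = 1 := by
    rw [he, ← Complex.exp_conj, ← Complex.exp_add]
    have : (starRingEnd ℂ) (-2 * Complex.I * φ) = 2 * Complex.I * φ := by
      simp only [_root_.map_mul, map_neg, map_ofNat, Complex.conj_I, Complex.conj_ofReal]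
      ring
    rw [this]
    norm_num [Complex.exp_zero]
  clear_value e
  rw [Fintype.not_linearIndependent_iff]
  refine ⟨fun p => if p = (0,1) then 1 else if p = (1,0) then -e else 0, ?_, (0,1), by norm_num⟩
  have hsum : ∑ p : Fin 2 × Fin 2,
      (if p = ((0 : Fin 2), (1 : Fin 2)) then (1:ℂ) else if p = (1,0) then -e else 0) •
        ((A p.1)ᴴ * (A p.2))
      = (A 0)ᴴ * (A 1) - e • ((A 1)ᴴ * (A 0)) := by
    rw [Fintype.sum_prod_type, Fin.sum_univ_two, Fin.sum_univ_two, Fin.sum_univ_two]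
    norm_num [Prod.ext_iff]
    module
  rw [hsum, hA0, hA1, sub_eq_zero]
  ext i j
  fin_cases i <;> fin_cases j <;>
    simp [Matrix.mul_apply, Fin.sum_univ_three, Matrix.conjTranspose_apply, Matrix.smul_apply,
      _root_.map_mul, map_neg]
  all_goals try ring
  · linear_combination (-(starRingEnd ℂ) β * γ) * hee
  · linear_combination hαc - 2*hγc - ((starRingEnd ℂ) γ * γ) * hee
  · linear_combination e * (2*hγc - hαc)
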